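/- Let α, β, p, q, k > 0 with kp < 1 and kq > 1. Then the improper integral ∫₀^∞ (α z^p + β z^q)^{-k} dz converges and equals Γ((1-kp)/(q-p))·Γ((kq-1)/(q-p)) / (α^k·Γ(k)·(q-p)) · (α/β)^((1-kp)/(q-p)). -/

import Mathlib

open MeasureTheory Set Real

lemma my_beta (a b : ℝ) (ha : 0 < a) (hb : 0 < b) :
    IntegrableOn (fun t : ℝ => t ^ (a-1) * (1-t) ^ (b-1)) (Set.Ioo 0 1) ∧
    ∫ t in Set.Ioo (0:ℝ) 1, t ^ (a-1) * (1-t) ^ (b-1)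
      = Real.Gamma a * Real.Gamma b / Real.Gamma (a+b) := by
  have hconv := Complex.betaIntegral_convergent (u := (a:ℂ)) (v := (b:ℂ)) (by simpa) (by simpa)
  have hcongr : ∀ t ∈ Set.Ioo (0:ℝ) 1,
      ((t:ℂ) ^ ((a:ℂ)-1) * (1-(t:ℂ)) ^ ((b:ℂ)-1)) = ((t ^ (a-1) * (1-t) ^ (b-1) : ℝ) : ℂ) := by
    intro t ht
    rw [Complex.ofReal_mul, Complex.ofReal_cpow ht.1.le, Complex.ofReal_cpow (by linarith [ht.2])]
    push_cast
    ring_nf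
  have hIoo : IntegrableOn (fun t : ℝ => ((t:ℂ) ^ ((a:ℂ)-1) * (1-(t:ℂ)) ^ ((b:ℂ)-1))) (Set.Ioo 0 1) := by
    have := (intervalIntegrable_iff_integrableOn_Ioo_of_le (by norm_num : (0:ℝ) ≤ 1)).mp hconv
    exact this
  have hIoo' : IntegrableOn (fun t : ℝ => ((t ^ (a-1) * (1-t) ^ (b-1) : ℝ) : ℂ)) (Set.Ioo 0 1) :=
    hIoo.congr_fun hcongr measurableSet_Ioo
  have hint : IntegrableOn (fun t : ℝ => t ^ (a-1) * (1-t) ^ (b-1)) (Set.Ioo 0 1) := by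
    simpa [IntegrableOn] using hIoo'.re
  refine ⟨hint, ?_⟩
  have hG := Complex.Gamma_mul_Gamma_eq_betaIntegral (s := (a:ℂ)) (t := (b:ℂ)) (by simpa) (by simpa)
  have hBeta : Complex.betaIntegral a b
      = ((∫ t in Set.Ioo (0:ℝ) 1, t ^ (a-1) * (1-t) ^ (b-1) : ℝ) : ℂ) := by
    rw [Complex.betaIntegral]
    rw [intervalIntegral.integral_of_le (by norm_num : (0:ℝ) ≤ 1),
      MeasureTheory.integral_Ioc_eq_integral_Ioo,
      MeasureTheory.setIntegral_congr_fun measurableSet_Ioo hcongr]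
    exact integral_ofReal
  have hGk : Complex.Gamma ((a:ℂ) + b) ≠ 0 := by
    rw [show ((a:ℂ) + b) = ((a+b:ℝ):ℂ) by push_cast; ring, Complex.Gamma_ofReal]
    exact_mod_cast (Real.Gamma_pos_of_pos (by linarith)).ne'
  have : ((Real.Gamma a * Real.Gamma b : ℝ) : ℂ)
      = ((Real.Gamma (a+b) : ℝ) : ℂ) * ((∫ t in Set.Ioo (0:ℝ) 1, t ^ (a-1) * (1-t) ^ (b-1) : ℝ) : ℂ) := by
    push_cast [← Complex.Gamma_ofReal]
    rw [← hBeta]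
    push_cast at hG ⊢
    convert hG using 2 <;> push_cast <;> ring
  have h2 : Real.Gamma a * Real.Gamma b
      = Real.Gamma (a+b) * ∫ t in Set.Ioo (0:ℝ) 1, t ^ (a-1) * (1-t) ^ (b-1) := by
    exact_mod_cast this
  rw [h2]
  field_simp [(Real.Gamma_pos_of_pos (show (0:ℝ) < a+b by linarith)).ne']

/-- The improper integral `∫₀^∞ (α z^p + β z^q)^{-k} dz` converges and
equals `Γ((1-kp)/(q-p))·Γ((kq-1)/(q-p)) / (α^k·Γ(k)·(q-p)) · (α/β)^((1-kp)/(q-p))`. -/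
theorem integral_formula_gamma
    (α β p q k : ℝ) (hα : 0 < α) (hβ : 0 < β) (hp : 0 < p) (hq : 0 < q) (hk : 0 < k)
    (hkp : k * p < 1) (hkq : 1 < k * q) :
    MeasureTheory.IntegrableOn (fun z : ℝ => (α * z ^ p + β * z ^ q) ^ (-k))
      (Set.Ioi (0:ℝ)) ∧
    (∫ z in Set.Ioi (0:ℝ), (α * z ^ p + β * z ^ q) ^ (-k)) =
      Real.Gamma ((1 - k * p) / (q - p)) * Real.Gamma ((k * q - 1) / (q - p)) /
        (α ^ k * Real.Gamma k * (q - p)) * (α / β) ^ ((1 - k * p) / (q - p)) := by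
  have hpq : p < q := by
    have : k * p < k * q := by linarith
    exact lt_of_mul_lt_mul_left this hk.le
  set d : ℝ := q - p with hd_def
  have hd : 0 < d := by rw [hd_def]; linarith
  set r : ℝ := 1/d with hr_def
  have hr : 0 < r := by positivity
  have hrd : r * d = 1 := by rw [hr_def]; field_simp
  set c : ℝ := (α/β) ^ r with hc_def
  have hc : 0 < c := by positivity
  set a : ℝ := (1 - k*p)/d with ha_def
  set b : ℝ := (k*q - 1)/d with hb_def
  have ha : 0 < a := by apply div_pos; linarith; exact hd
  have hb : 0 < b := by apply div_pos; linarith; exact hd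
  have hab : a + b = k := by
    rw [ha_def, hb_def]
    field_simp
    ring
  have hra : r * (1 - k*p) = a := by rw [ha_def, hr_def]; field_simp
  -- the substitution map
  set φ : ℝ → ℝ := fun t => c * (t/(1-t)) ^ r with hφ_def
  set φ' : ℝ → ℝ := fun t => c * (r * (t/(1-t)) ^ (r-1) * ((1-t)^2)⁻¹) with hφ'_def
  have hu : ∀ t ∈ Set.Ioo (0:ℝ) 1, 0 < t/(1-t) := fun t ht =>
    div_pos ht.1 (by linarith [ht.2])
  have hderiv : ∀ t ∈ Set.Ioo (0:ℝ) 1, HasDerivWithinAt φ (φ' t) (Set.Ioo 0 1) t := by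
    intro t ht
    have h1t : (1:ℝ) - t ≠ 0 := by have h2 := ht.2; intro h; have := sub_eq_zero.mp h; linarith
    have hdu : HasDerivAt (fun t : ℝ => t/(1-t)) (((1-t)^2)⁻¹) t := by
      have := (hasDerivAt_id t).div ((hasDerivAt_id t).const_sub 1) h1t
      convert this using 1
      rotate_right
      simp only [id]
      rw [eq_div_iff (pow_ne_zero 2 h1t), inv_mul_cancel₀ (pow_ne_zero 2 h1t)]
      ring
      all_goals rfl
    have hpow : HasDerivAt (fun x : ℝ => x ^ r) (r * (t/(1-t)) ^ (r-1)) (t/(1-t)) :=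
      Real.hasDerivAt_rpow_const (Or.inl (hu t ht).ne')
    have := (hpow.comp t hdu).const_mul c
    refine HasDerivAt.hasDerivWithinAt ?_
    convert this using 1
    all_goals rfl
  have hmono : StrictMonoOn φ (Set.Ioo 0 1) := by
    intro x hx y hy hxy
    have h1 : x/(1-x) < y/(1-y) := by
      rw [div_lt_div_iff₀ (by linarith [hx.2]) (by linarith [hy.2])]
      nlinarith
    exact mul_lt_mul_of_pos_left (Real.rpow_lt_rpow (hu x hx).le h1 hr) hc
  have hinj : Set.InjOn φ (Set.Ioo 0 1) := hmono.injOn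
  have himg : φ '' Set.Ioo 0 1 = Set.Ioi 0 := by
    ext y
    constructor
    · rintro ⟨t, ht, rfl⟩
      exact mul_pos hc (Real.rpow_pos_of_pos (hu t ht) r)
    · intro hy
      have hy' : (0:ℝ) < y := hy
      set u0 : ℝ := (y/c) ^ d with hu0_def
      have hu0 : 0 < u0 := Real.rpow_pos_of_pos (by positivity) d
      refine ⟨u0/(1+u0), ⟨by positivity, ?_⟩, ?_⟩
      · rw [div_lt_one (by positivity)]; linarith
      · have h1 : (1:ℝ) - u0/(1+u0) = 1/(1+u0) := by field_simp; ring
        have h2 : u0/(1+u0) / (1 - u0/(1+u0)) = u0 := by rw [h1]; field_simp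
        simp only [hφ_def]
        rw [h2, hu0_def]
        rw [← Real.rpow_mul (by positivity : (0:ℝ) ≤ y/c), mul_comm d r, hrd, Real.rpow_one]
        field_simp
  have hdb : (0:ℝ) < α/β := div_pos hα hβ
  have hsum : ∀ t ∈ Set.Ioo (0:ℝ) 1,
      α * (φ t) ^ p + β * (φ t) ^ q = α * c ^ p * (t/(1-t)) ^ (r*p) / (1-t) := by
    intro t ht
    have hut := hu t ht
    have h1t : (0:ℝ) < 1 - t := by linarith [ht.2]
    have hcd : c ^ d = α/β := by
      rw [hc_def, ← Real.rpow_mul hdb.le, hrd, Real.rpow_one]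
    have hpd : p + d = q := by rw [hd_def]; ring
    have hcq : c ^ q = c ^ p * (α/β) := by
      rw [← hpd, Real.rpow_add hc, hcd]
    have huq : (t/(1-t)) ^ (r*q) = (t/(1-t)) ^ (r*p) * (t/(1-t)) := by
      have hh : r*q = r*p + 1 := by
        rw [hr_def, hd_def]
        have hne : q - p ≠ 0 := by linarith
        field_simp
        ring
      rw [hh, Real.rpow_add hut, Real.rpow_one]
    have hφp : (φ t) ^ p = c ^ p * (t/(1-t)) ^ (r*p) := by
      simp only [hφ_def]
      rw [Real.mul_rpow hc.le (Real.rpow_nonneg hut.le r), ← Real.rpow_mul hut.le]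
    have hφq : (φ t) ^ q = c ^ q * (t/(1-t)) ^ (r*q) := by
      simp only [hφ_def]
      rw [Real.mul_rpow hc.le (Real.rpow_nonneg hut.le r), ← Real.rpow_mul hut.le]
    rw [hφp, hφq, hcq, huq]
    field_simp
    ring
  set C : ℝ := (α/β) ^ a * (α ^ k)⁻¹ * r with hC_def
  have hsimp : ∀ t ∈ Set.Ioo (0:ℝ) 1,
      |φ' t| * (α * (φ t) ^ p + β * (φ t) ^ q) ^ (-k) = C * (t ^ (a-1) * (1-t) ^ (b-1)) := by
    intro t ht
    have hut := hu t ht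
    have h1t : (0:ℝ) < 1 - t := by linarith [ht.2]
    have ht0 := ht.1
    rw [hsum t ht]
    have hφ'pos : 0 < φ' t := by
      simp only [hφ'_def]
      positivity
    rw [abs_of_pos hφ'pos]
    have hLpos : 0 < φ' t * (α * c ^ p * (t/(1-t)) ^ (r*p) / (1-t)) ^ (-k) := by
      apply mul_pos hφ'pos
      apply Real.rpow_pos_of_pos
      positivity
    have hRpos : 0 < C * (t ^ (a-1) * (1-t) ^ (b-1)) := by
      rw [hC_def]; positivity
    rw [← Real.exp_log hLpos, ← Real.exp_log hRpos]
    congr 1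
    rw [Real.log_mul hφ'pos.ne' (Real.rpow_pos_of_pos (by positivity) _).ne',
      Real.log_rpow (by positivity)]
    simp only [hφ'_def]
    rw [Real.log_mul hc.ne' (by positivity), Real.log_mul (by positivity) (by positivity),
      Real.log_mul hr.ne' (Real.rpow_pos_of_pos hut _).ne',
      Real.log_rpow hut, Real.log_inv, Real.log_pow,
      Real.log_div (by positivity : (α * c ^ p * (t/(1-t)) ^ (r*p) : ℝ) ≠ 0) h1t.ne',
      Real.log_mul (by positivity : (α * c ^ p : ℝ) ≠ 0) (Real.rpow_pos_of_pos hut _).ne',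
      Real.log_mul hα.ne' (Real.rpow_pos_of_pos hc _).ne',
      Real.log_rpow hc, Real.log_rpow hut,
      Real.log_div ht0.ne' h1t.ne',
      hC_def,
      Real.log_mul (by positivity : ((α/β) ^ a * (α ^ k)⁻¹ * r : ℝ) ≠ 0)
        (by positivity : (t ^ (a-1) * (1-t) ^ (b-1) : ℝ) ≠ 0),
      Real.log_mul (by positivity : ((α/β) ^ a * (α ^ k)⁻¹ : ℝ) ≠ 0) hr.ne',
      Real.log_mul (by positivity : ((α/β) ^ a : ℝ) ≠ 0) (by positivity : ((α ^ k : ℝ))⁻¹ ≠ 0),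
      Real.log_rpow hdb, Real.log_inv, Real.log_rpow hα,
      Real.log_mul (Real.rpow_pos_of_pos ht0 _).ne' (Real.rpow_pos_of_pos h1t _).ne',
      Real.log_rpow ht0, Real.log_rpow h1t]
    rw [Real.log_rpow hdb, Real.log_div hα.ne' hβ.ne']
    have hb' : b = k - a := by linarith [hab]
    rw [hb', ← hra]
    push_cast
    ring
  have hbeta := my_beta a b ha hb
  have hInt2 : IntegrableOn
      (fun t => |φ' t| • (fun z : ℝ => (α * z ^ p + β * z ^ q) ^ (-k)) (φ t)) (Set.Ioo 0 1) := by
    refine MeasureTheory.IntegrableOn.congr_fun (hbeta.1.const_mul C) (fun t ht => ?_)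
      measurableSet_Ioo
    simp only [smul_eq_mul]
    exact (hsimp t ht).symm
  have hInt : IntegrableOn (fun z : ℝ => (α * z ^ p + β * z ^ q) ^ (-k)) (Set.Ioi 0) := by
    rw [← himg, integrableOn_image_iff_integrableOn_abs_deriv_smul measurableSet_Ioo hderiv hinj]
    exact hInt2
  refine ⟨hInt, ?_⟩
  have hval := integral_image_eq_integral_abs_deriv_smul measurableSet_Ioo hderiv hinj
    (fun z : ℝ => (α * z ^ p + β * z ^ q) ^ (-k))
  rw [himg] at hval
  rw [hval, setIntegral_congr_fun measurableSet_Ioo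
      (fun t ht => by simpa using hsimp t ht : Set.EqOn _ (fun t => C * (t ^ (a-1) * (1-t) ^ (b-1))) _),
    MeasureTheory.integral_const_mul, hbeta.2, hab]
  rw [hC_def, hr_def]
  have hGk := (Real.Gamma_pos_of_pos hk).ne'
  field_simp
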